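/- arXiv:2602.14718 — 3 statements merged into one kernel-verified Lean document; each statement's English description precedes it below -/
import Mathlib

section
/- If G is a subgroup of GL₂(F_p) whose order is divisible by p and which does not contain SL₂(F_p), then G stabilizes a line in F_p², i.e. G is contained in a Borel subgroup (a conjugate of the upper triangular matrices). -/
open Matrix

variable {p : ℕ} [Fact p.Prime]

lemma CH2 (A : Matrix (Fin 2) (Fin 2) (ZMod p)) : A * A = A.trace • A - A.det • 1 := by
  ext i j
  fin_cases i <;> fin_cases j <;>
    simp [Matrix.mul_apply, Fin.sum_univ_two, Matrix.trace, Matrix.det_fin_two, Matrix.diag,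
      Matrix.one_apply] <;> ring

/-- If u has order p in GL₂(F_p), then (u-1)² = 0. -/
lemma sq_zero_of_orderp (u : GL (Fin 2) (ZMod p)) (hu : orderOf u = p) :
    ((u : Matrix (Fin 2) (Fin 2) (ZMod p)) - 1) * ((u : Matrix (Fin 2) (Fin 2) (ZMod p)) - 1) = 0 := by
  set A : Matrix (Fin 2) (Fin 2) (ZMod p) := (u : Matrix (Fin 2) (Fin 2) (ZMod p))
  set N : Matrix (Fin 2) (Fin 2) (ZMod p) := A - 1 with hN
  have hp1 : (1 : ℕ) ≤ p := (Fact.out : p.Prime).one_lt.le.trans' (by norm_num)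
  have hNp : N ^ p = 0 := by
    have hc : Commute A (1 : Matrix (Fin 2) (Fin 2) (ZMod p)) := Commute.one_right A
    have := sub_pow_char_of_commute (p := p) hc
    rw [hN, this, one_pow]
    have : A ^ p = 1 := by
      have : u ^ p = 1 := by
        have := pow_orderOf_eq_one u
        rwa [hu] at this
      calc A ^ p = ((u ^ p : GL (Fin 2) (ZMod p)) : Matrix (Fin 2) (Fin 2) (ZMod p)) := by
            simp [A, Units.val_pow_eq_pow_val]
        _ = 1 := by rw [this]; rfl
    rw [this, sub_self]
  have hN0 : N ≠ 0 := by
    intro h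
    have : A = 1 := by rwa [hN, sub_eq_zero] at h
    have hu1 : u = 1 := Units.ext this
    rw [hu1, orderOf_one] at hu
    exact (Fact.out : p.Prime).one_lt.ne' hu.symm
  -- det N = 0
  have hdet : N.det = 0 := by
    have : N.det ^ p = 0 := by rw [← Matrix.det_pow, hNp]; exact Matrix.det_zero
    exact pow_eq_zero_iff (by omega) |>.mp this
  have hsq : N * N = N.trace • N := by rw [CH2, hdet]; simp
  -- N^k = trace^(k-1) • N
  have hpow : ∀ k : ℕ, N ^ (k + 1) = N.trace ^ k • N := by
    intro k
    induction k with
    | zero => simp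
    | succ k ih =>
      rw [pow_succ, ih, Matrix.smul_mul, hsq, smul_smul, pow_succ]
  have htr : N.trace = 0 := by
    have h := hpow (p - 1)
    rw [Nat.sub_add_cancel hp1, hNp] at h
    by_contra htr0
    rcases smul_eq_zero.mp h.symm with h' | h'
    · exact (pow_ne_zero _ htr0) h'
    · exact hN0 h'
  rw [hsq, htr, zero_smul]

variable {p : ℕ} [Fact p.Prime]

lemma ker_dim_one (N : Matrix (Fin 2) (Fin 2) (ZMod p)) (h0 : N ≠ 0) (h2 : N * N = 0) :
    Module.finrank (ZMod p) (LinearMap.ker N.mulVecLin) = 1 := by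
  set f := N.mulVecLin
  have hrk := LinearMap.finrank_range_add_finrank_ker f
  have htop : Module.finrank (ZMod p) (Fin 2 → ZMod p) = 2 := by simp
  rw [htop] at hrk
  have hrange_le : LinearMap.range f ≤ LinearMap.ker f := by
    rintro x ⟨y, rfl⟩
    have : f (f y) = (N * N).mulVecLin y := by simp [f, Matrix.mulVecLin_mul]
    simp [LinearMap.mem_ker, this, h2]
  have h1 : 1 ≤ Module.finrank (ZMod p) (LinearMap.range f) := by
    rw [Nat.one_le_iff_ne_zero]
    intro h
    have : LinearMap.range f = ⊥ := Submodule.finrank_eq_zero.mp h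
    have : f = 0 := LinearMap.range_eq_bot.mp this
    apply h0
    ext i j
    have h3 : f (Pi.single j 1) = 0 := by rw [this]; rfl
    have h4 := congrFun h3 i
    simpa [f, Matrix.mulVec_single] using h4
  have hle : Module.finrank (ZMod p) (LinearMap.range f) ≤
      Module.finrank (ZMod p) (LinearMap.ker f) := Submodule.finrank_mono hrange_le
  omega

lemma span_eq_of_mem {W : Submodule (ZMod p) (Fin 2 → ZMod p)} (h1 : Module.finrank (ZMod p) W = 1)
    {x : Fin 2 → ZMod p} (hx : x ∈ W) (hx0 : x ≠ 0) :
    Submodule.span (ZMod p) {x} = W := by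
  apply Submodule.eq_of_le_of_finrank_le (Submodule.span_le.mpr (by simpa using hx))
  rw [h1, finrank_span_singleton hx0]

def Uu (x : ZMod p) : GL (Fin 2) (ZMod p) :=
  ⟨!![1, x; 0, 1], !![1, -x; 0, 1],
    by ext i j; fin_cases i <;> fin_cases j <;> simp [Matrix.mul_apply, Fin.sum_univ_two],
    by ext i j; fin_cases i <;> fin_cases j <;> simp [Matrix.mul_apply, Fin.sum_univ_two]⟩

def Lo (x : ZMod p) : GL (Fin 2) (ZMod p) :=
  ⟨!![1, 0; x, 1], !![1, 0; -x, 1],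
    by ext i j; fin_cases i <;> fin_cases j <;> simp [Matrix.mul_apply, Fin.sum_univ_two],
    by ext i j; fin_cases i <;> fin_cases j <;> simp [Matrix.mul_apply, Fin.sum_univ_two]⟩

@[simp] lemma Uu_val (x : ZMod p) : (Uu x : Matrix (Fin 2) (Fin 2) (ZMod p)) = !![1, x; 0, 1] := rfl
@[simp] lemma Lo_val (x : ZMod p) : (Lo x : Matrix (Fin 2) (Fin 2) (ZMod p)) = !![1, 0; x, 1] := rfl

lemma Uu_mul (x y : ZMod p) : Uu x * Uu y = Uu (x + y) := by
  ext i j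
  fin_cases i <;> fin_cases j <;>
    simp [Uu, Matrix.mul_apply, Fin.sum_univ_two] <;> ring

lemma Lo_mul (x y : ZMod p) : Lo x * Lo y = Lo (x + y) := by
  ext i j
  fin_cases i <;> fin_cases j <;>
    simp [Lo, Matrix.mul_apply, Fin.sum_univ_two] <;> ring

lemma Uu_pow (x : ZMod p) (n : ℕ) : Uu x ^ n = Uu ((n : ZMod p) * x) := by
  induction n with
  | zero =>
    ext i j; fin_cases i <;> fin_cases j <;> simp [Uu]
  | succ n ih =>
    rw [pow_succ, ih, Uu_mul]
    push_cast
    ring_nf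

lemma Lo_pow (x : ZMod p) (n : ℕ) : Lo x ^ n = Lo ((n : ZMod p) * x) := by
  induction n with
  | zero =>
    ext i j; fin_cases i <;> fin_cases j <;> simp [Lo]
  | succ n ih =>
    rw [pow_succ, ih, Lo_mul]
    push_cast
    ring_nf

/-- key generation lemma -/
lemma mem_of_det_one (H : Subgroup (GL (Fin 2) (ZMod p)))
    (hU : ∀ x : ZMod p, Uu x ∈ H) (hL : ∀ x : ZMod p, Lo x ∈ H) :
    ∀ M : GL (Fin 2) (ZMod p), (M : Matrix (Fin 2) (Fin 2) (ZMod p)).det = 1 → M ∈ H := by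
  have key : ∀ M : GL (Fin 2) (ZMod p), (M : Matrix (Fin 2) (Fin 2) (ZMod p)).det = 1 →
      (M : Matrix (Fin 2) (Fin 2) (ZMod p)) 1 0 ≠ 0 → M ∈ H := by
    intro M hdet hc
    set A : Matrix (Fin 2) (Fin 2) (ZMod p) := (M : Matrix (Fin 2) (Fin 2) (ZMod p)) with hA
    have hd : A 0 0 * A 1 1 - A 0 1 * A 1 0 = 1 := by
      rw [← Matrix.det_fin_two]; exact hdet
    have : M = Uu ((A 0 0 - 1) / A 1 0) * Lo (A 1 0) * Uu ((A 1 1 - 1) / A 1 0) := by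
      apply Units.ext
      show A = _
      rw [Units.val_mul, Units.val_mul, Uu_val, Lo_val, Uu_val]
      ext i j
      fin_cases i <;> fin_cases j <;>
        simp [Matrix.mul_apply, Fin.sum_univ_two] <;> field_simp <;>
        first
        | ring1
        | linear_combination hd
        | linear_combination -hd
        | linear_combination 2*hd
        | linear_combination -2*hd
        | linear_combination (A 1 0) * hd
        | linear_combination -(A 1 0) * hd
    rw [this]
    exact mul_mem (mul_mem (hU _) (hL _)) (hU _)
  intro M hdet
  by_cases hc : (M : Matrix (Fin 2) (Fin 2) (ZMod p)) 1 0 ≠ 0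
  · exact key M hdet hc
  · push_neg at hc
    have hd : (M : Matrix (Fin 2) (Fin 2) (ZMod p)) 0 0 *
        (M : Matrix (Fin 2) (Fin 2) (ZMod p)) 1 1 = 1 := by
      have := Matrix.det_fin_two (M : Matrix (Fin 2) (Fin 2) (ZMod p))
      rw [hdet, hc] at this
      linear_combination -this
    have hM' : M = (M * Lo 1) * (Lo 1)⁻¹ := by group
    rw [hM']
    apply mul_mem _ (inv_mem (hL 1))
    apply key
    · rw [Units.val_mul, Matrix.det_mul, hdet, Lo_val, Matrix.det_fin_two]
      simp
    · rw [Units.val_mul, Lo_val]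
      intro h
      rw [Matrix.mul_apply, Fin.sum_univ_two] at h
      simp [hc] at h
      exact (by intro h0; rw [h0, mul_zero] at hd; exact zero_ne_one hd : (M : Matrix (Fin 2) (Fin 2) (ZMod p)) 1 1 ≠ 0) h

lemma det_ne_zero_of_indep {e1 e2 : Fin 2 → ZMod p} (h1 : e1 ≠ 0)
    (h2 : e2 ∉ Submodule.span (ZMod p) {e1}) :
    e1 0 * e2 1 - e2 0 * e1 1 ≠ 0 := by
  intro hdet
  apply h2
  rw [Submodule.mem_span_singleton]
  by_cases h : e1 0 = 0
  · have h11 : e1 1 ≠ 0 := by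
      intro h'
      apply h1
      funext i; fin_cases i <;> simp [h, h']
    have hz : e2 0 * e1 1 = 0 := by linear_combination -hdet + e2 1 * h
    have h20 : e2 0 = 0 := by
      rcases mul_eq_zero.mp hz with h' | h'
      · exact h'
      · exact absurd h' h11
    exact ⟨e2 1 / e1 1, by funext i; fin_cases i <;> simp [h, h20] <;> field_simp⟩
  · refine ⟨e2 0 / e1 0, ?_⟩
    funext i
    fin_cases i
    · simp; field_simp
    · simp
      field_simp
      linear_combination -hdet


/-- If G ≤ GL₂(F_p) has order divisible by p and does not contain SL₂(F_p),
then G stabilizes a line in F_p², i.e. G is contained in a Borel subgroup. -/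
theorem subgroup_order_div_p_stabilizes_line (p : ℕ) [Fact p.Prime]
    (G : Subgroup (GL (Fin 2) (ZMod p)))
    (hdvd : p ∣ Nat.card G)
    (hSL : ¬ ∀ M : GL (Fin 2) (ZMod p),
      (M : Matrix (Fin 2) (Fin 2) (ZMod p)).det = 1 → M ∈ G) :
    ∃ L : Submodule (ZMod p) (Fin 2 → ZMod p),
      Module.finrank (ZMod p) L = 1 ∧
      ∀ g ∈ G, L.map (Matrix.mulVecLin (g : Matrix (Fin 2) (Fin 2) (ZMod p))) = L := by
  haveI : NeZero p := ⟨(Fact.out : p.Prime).ne_zero⟩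
  haveI : Fintype G := Fintype.ofFinite G
  obtain ⟨u₀, hu₀⟩ := exists_prime_orderOf_dvd_card (G := ↥G) p (by rwa [← Nat.card_eq_fintype_card])
  set u : GL (Fin 2) (ZMod p) := (u₀ : GL (Fin 2) (ZMod p)) with hu_def
  have huG : u ∈ G := u₀.2
  have hord : orderOf u = p := by
    have h := orderOf_injective G.subtype Subtype.coe_injective u₀
    rw [hu₀] at h
    exact h
  set Nu : Matrix (Fin 2) (Fin 2) (ZMod p) := (u : Matrix (Fin 2) (Fin 2) (ZMod p)) - 1 with hNu_def
  have hNu2 : Nu * Nu = 0 := sq_zero_of_orderp u hord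
  have hNu0 : Nu ≠ 0 := by
    intro h
    have h1 : u = 1 := Units.ext (by rwa [hNu_def, sub_eq_zero] at h)
    rw [h1, orderOf_one] at hord
    exact (Fact.out : p.Prime).one_lt.ne' hord.symm
  set L := LinearMap.ker Nu.mulVecLin with hL_def
  have hL1 : Module.finrank (ZMod p) L = 1 := ker_dim_one Nu hNu0 hNu2
  refine ⟨L, hL1, ?_⟩
  by_contra hcon
  push_neg at hcon
  obtain ⟨g₀, hg₀, hne⟩ := hcon
  apply hSL
  -- choose e1 spanning L
  have hLbot : L ≠ ⊥ := by
    intro h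
    rw [h] at hL1
    simp at hL1
  obtain ⟨e1, he1L, he10⟩ := Submodule.exists_mem_ne_zero_of_ne_bot hLbot
  have hspan1 : Submodule.span (ZMod p) {e1} = L := span_eq_of_mem hL1 he1L he10
  set A : Matrix (Fin 2) (Fin 2) (ZMod p) := (g₀ : Matrix (Fin 2) (Fin 2) (ZMod p)) with hA_def
  set B : Matrix (Fin 2) (Fin 2) (ZMod p) := ((g₀⁻¹ : GL (Fin 2) (ZMod p)) :
    Matrix (Fin 2) (Fin 2) (ZMod p)) with hB_def
  have hAB : A * B = 1 := by rw [hA_def, hB_def, ← Units.val_mul, mul_inv_cancel]; rfl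
  have hBA : B * A = 1 := by rw [hA_def, hB_def, ← Units.val_mul, inv_mul_cancel]; rfl
  set e2 : Fin 2 → ZMod p := A.mulVec e1 with he2_def
  have he20 : e2 ≠ 0 := by
    intro h
    apply he10
    have h2 : B.mulVec (A.mulVec e1) = e1 := by
      rw [Matrix.mulVec_mulVec, hBA, Matrix.one_mulVec]
    rw [← he2_def, h, Matrix.mulVec_zero] at h2
    exact h2.symm
  have hmap : L.map (Matrix.mulVecLin A) = Submodule.span (ZMod p) {e2} := by
    rw [← hspan1, Submodule.map_span, Set.image_singleton, Matrix.mulVecLin_apply]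
  have hne' : Submodule.span (ZMod p) {e2} ≠ L := by rw [← hmap]; exact hne
  have he2L : e2 ∉ L := by
    intro hmem
    apply hne'
    rw [← hspan1]
    apply Submodule.eq_of_le_of_finrank_le
    · rw [Submodule.span_le, Set.singleton_subset_iff]
      rw [← hspan1] at hmem
      exact hmem
    · rw [finrank_span_singleton he10, finrank_span_singleton he20]
  -- v = g₀ u g₀⁻¹
  set v : GL (Fin 2) (ZMod p) := g₀ * u * g₀⁻¹ with hv_def
  have hvG : v ∈ G := mul_mem (mul_mem hg₀ huG) (inv_mem hg₀)
  set Nv : Matrix (Fin 2) (Fin 2) (ZMod p) := (v : Matrix (Fin 2) (Fin 2) (ZMod p)) - 1 with hNv_def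
  have hNvA : Nv = A * Nu * B := by
    rw [hNv_def, hNu_def, hv_def]
    rw [Units.val_mul, Units.val_mul, ← hA_def, ← hB_def]
    rw [mul_sub, sub_mul, mul_one, hAB]
  have hNuA : Nu = B * Nv * A := by
    rw [hNvA, mul_assoc, mul_assoc, hBA, mul_one, ← mul_assoc, hBA, one_mul]
  have hNv2 : Nv * Nv = 0 := by
    rw [hNvA]
    calc A * Nu * B * (A * Nu * B) = A * Nu * (B * A) * Nu * B := by noncomm_ring
      _ = A * (Nu * Nu) * B := by rw [hBA]; noncomm_ring
      _ = 0 := by rw [hNu2]; noncomm_ring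
  have hNv0 : Nv ≠ 0 := by
    intro h
    apply hNu0
    rw [hNuA, h]
    noncomm_ring
  have hLv1 : Module.finrank (ZMod p) (LinearMap.ker Nv.mulVecLin) = 1 :=
    ker_dim_one Nv hNv0 hNv2
  have he1ker : Nu.mulVec e1 = 0 := he1L
  have he2v : e2 ∈ LinearMap.ker Nv.mulVecLin := by
    show Nv.mulVec e2 = 0
    rw [he2_def, Matrix.mulVec_mulVec, hNvA, mul_assoc, hBA, mul_one, ← Matrix.mulVec_mulVec,
      he1ker, Matrix.mulVec_zero]
  have hspan2 : Submodule.span (ZMod p) {e2} = LinearMap.ker Nv.mulVecLin :=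
    span_eq_of_mem hLv1 he2v he20
  -- coefficients a b
  obtain ⟨aa, haa⟩ : ∃ a : ZMod p, Nu.mulVec e2 = a • e1 := by
    have hmem : Nu.mulVec e2 ∈ L := by
      show Nu.mulVec (Nu.mulVec e2) = 0
      rw [Matrix.mulVec_mulVec, hNu2, Matrix.zero_mulVec]
    rw [← hspan1, Submodule.mem_span_singleton] at hmem
    obtain ⟨a, ha⟩ := hmem
    exact ⟨a, ha.symm⟩
  have haa0 : aa ≠ 0 := by
    intro h
    apply he2L
    show Nu.mulVec e2 = 0
    rw [haa, h, zero_smul]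
  obtain ⟨bb, hbb⟩ : ∃ b : ZMod p, Nv.mulVec e1 = b • e2 := by
    have hmem : Nv.mulVec e1 ∈ LinearMap.ker Nv.mulVecLin := by
      show Nv.mulVec (Nv.mulVec e1) = 0
      rw [Matrix.mulVec_mulVec, hNv2, Matrix.zero_mulVec]
    rw [← hspan2, Submodule.mem_span_singleton] at hmem
    obtain ⟨b, hb⟩ := hmem
    exact ⟨b, hb.symm⟩
  have hbb0 : bb ≠ 0 := by
    intro h
    apply hne'
    have he1v : e1 ∈ LinearMap.ker Nv.mulVecLin := by
      show Nv.mulVec e1 = 0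
      rw [hbb, h, zero_smul]
    rw [← hspan2] at he1v
    rw [← hspan1]
    apply (Submodule.eq_of_le_of_finrank_le ?_ ?_).symm
    · rw [Submodule.span_le, Set.singleton_subset_iff]
      exact he1v
    · rw [finrank_span_singleton he10, finrank_span_singleton he20]
  -- mulVec identities
  have hu1 : (u : Matrix (Fin 2) (Fin 2) (ZMod p)).mulVec e1 = e1 := by
    have := he1ker
    rw [hNu_def, Matrix.sub_mulVec, Matrix.one_mulVec, sub_eq_zero] at this
    exact this
  have hu2 : (u : Matrix (Fin 2) (Fin 2) (ZMod p)).mulVec e2 = aa • e1 + e2 := by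
    have := haa
    rw [hNu_def, Matrix.sub_mulVec, Matrix.one_mulVec, sub_eq_iff_eq_add] at this
    exact this
  have hv2 : (v : Matrix (Fin 2) (Fin 2) (ZMod p)).mulVec e2 = e2 := by
    have h2 : ((v : Matrix (Fin 2) (Fin 2) (ZMod p)) - 1).mulVec e2 = 0 := he2v
    rwa [Matrix.sub_mulVec, Matrix.one_mulVec, sub_eq_zero] at h2
  have hv1 : (v : Matrix (Fin 2) (Fin 2) (ZMod p)).mulVec e1 = bb • e2 + e1 := by
    have := hbb
    rw [hNv_def, Matrix.sub_mulVec, Matrix.one_mulVec, sub_eq_iff_eq_add] at this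
    exact this
  -- matrix P
  set P : Matrix (Fin 2) (Fin 2) (ZMod p) := !![e1 0, e2 0; e1 1, e2 1] with hP_def
  have he2span : e2 ∉ Submodule.span (ZMod p) {e1} := by rwa [hspan1]
  have hdetP : P.det ≠ 0 := by
    rw [Matrix.det_fin_two]
    simpa [hP_def] using det_ne_zero_of_indep he10 he2span
  have hPu : IsUnit P := (Matrix.isUnit_iff_isUnit_det P).mpr (isUnit_iff_ne_zero.mpr hdetP)
  set Pu : GL (Fin 2) (ZMod p) := hPu.unit with hPu_def
  have hPuval : (Pu : Matrix (Fin 2) (Fin 2) (ZMod p)) = P := hPu.unit_spec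
  -- entrywise versions of mulVec identities
  have eu10 := congrFun hu1 0
  have eu11 := congrFun hu1 1
  have eu20 := congrFun hu2 0
  have eu21 := congrFun hu2 1
  have ev10 := congrFun hv1 0
  have ev11 := congrFun hv1 1
  have ev20 := congrFun hv2 0
  have ev21 := congrFun hv2 1
  simp only [Matrix.mulVec, dotProduct, Fin.sum_univ_two, Pi.add_apply, Pi.smul_apply,
    smul_eq_mul] at eu10 eu11 eu20 eu21 ev10 ev11 ev20 ev21
  have hUP : (u : Matrix (Fin 2) (Fin 2) (ZMod p)) * P = P * (Uu aa).val := by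
    ext i j
    fin_cases i <;> fin_cases j <;>
      simp [hP_def, Matrix.mul_apply, Fin.sum_univ_two] <;>
      first
      | linear_combination eu10
      | linear_combination eu11
      | linear_combination eu20
      | linear_combination eu21
  have hVP : (v : Matrix (Fin 2) (Fin 2) (ZMod p)) * P = P * (Lo bb).val := by
    ext i j
    fin_cases i <;> fin_cases j <;>
      simp [hP_def, Matrix.mul_apply, Fin.sum_univ_two] <;>
      first
      | linear_combination ev10
      | linear_combination ev11
      | linear_combination ev20
      | linear_combination ev21
  -- conjugation subgroup
  set H : Subgroup (GL (Fin 2) (ZMod p)) := G.comap (MulAut.conj Pu).toMonoidHom with hH_def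
  have hconjU : Pu * Uu aa * Pu⁻¹ = u := by
    have h1 : u * Pu = Pu * Uu aa := by
      apply Units.ext
      rw [Units.val_mul, Units.val_mul, hPuval]
      exact hUP
    calc Pu * Uu aa * Pu⁻¹ = u * Pu * Pu⁻¹ := by rw [h1]
      _ = u := by group
  have hconjL : Pu * Lo bb * Pu⁻¹ = v := by
    have h1 : v * Pu = Pu * Lo bb := by
      apply Units.ext
      rw [Units.val_mul, Units.val_mul, hPuval]
      exact hVP
    calc Pu * Lo bb * Pu⁻¹ = v * Pu * Pu⁻¹ := by rw [h1]
      _ = v := by group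
  have hUmem : ∀ x : ZMod p, Uu x ∈ H := by
    intro x
    rw [hH_def, Subgroup.mem_comap]
    set k : ℕ := (x / aa).val with hk_def
    have hkx : (k : ZMod p) * aa = x := by
      rw [hk_def, ZMod.natCast_val, ZMod.cast_id, div_mul_cancel₀ _ haa0]
    have hx : Uu x = Uu aa ^ k := by rw [Uu_pow, hkx]
    rw [hx, map_pow]
    have : (MulAut.conj Pu).toMonoidHom (Uu aa) = u := by
      simp only [MulEquiv.toMonoidHom_eq_coe, MonoidHom.coe_coe, MulAut.conj_apply]
      exact hconjU
    rw [this]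
    exact pow_mem huG k
  have hLmem : ∀ x : ZMod p, Lo x ∈ H := by
    intro x
    rw [hH_def, Subgroup.mem_comap]
    set k : ℕ := (x / bb).val with hk_def
    have hkx : (k : ZMod p) * bb = x := by
      rw [hk_def, ZMod.natCast_val, ZMod.cast_id, div_mul_cancel₀ _ hbb0]
    have hx : Lo x = Lo bb ^ k := by rw [Lo_pow, hkx]
    rw [hx, map_pow]
    have : (MulAut.conj Pu).toMonoidHom (Lo bb) = v := by
      simp only [MulEquiv.toMonoidHom_eq_coe, MonoidHom.coe_coe, MulAut.conj_apply]
      exact hconjL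
    rw [this]
    exact pow_mem hvG k
  -- conclude
  intro M hdetM
  have hdetM' : ((Pu⁻¹ * M * Pu : GL (Fin 2) (ZMod p)) :
      Matrix (Fin 2) (Fin 2) (ZMod p)).det = 1 := by
    rw [Units.val_mul, Units.val_mul, Matrix.det_mul, Matrix.det_mul, hdetM, mul_one,
      mul_comm, ← Matrix.det_mul, ← Units.val_mul, mul_inv_cancel]
    simp
  have hmem : Pu⁻¹ * M * Pu ∈ H := mem_of_det_one H hUmem hLmem _ hdetM'
  rw [hH_def, Subgroup.mem_comap] at hmem
  have : (MulAut.conj Pu).toMonoidHom (Pu⁻¹ * M * Pu) = M := by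
    simp only [MulEquiv.toMonoidHom_eq_coe, MonoidHom.coe_coe, MulAut.conj_apply]
    group
  rwa [this] at hmem
end

section
/- The elliptic curve y² = x³ − 27 has no rational points with x ∉ {3, 0, −6}; equivalently, its Mordell–Weil group over Q is finite and every affine rational point has x-coordinate 3, 0, or −6 (with y = 0, y² = −27 impossible, and y² = −243 impossible respectively), so the only affine rational point is (3, 0). -/
open NumberField IsCyclotomicExtension.Rat.Three

noncomputable section

local notation "K3" => CyclotomicField 3 ℚ
local notation "R3" => 𝓞 (CyclotomicField 3 ℚ)

instance : IsCyclotomicExtension {3} ℚ (CyclotomicField 3 ℚ) := CyclotomicField.isCyclotomicExtension 3 ℚ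

instance : NumberField (CyclotomicField 3 ℚ) := IsCyclotomicExtension.numberField {3} ℚ _

instance : IsPrincipalIdealRing (𝓞 (CyclotomicField 3 ℚ)) :=
  IsCyclotomicExtension.Rat.three_pid _

def zet : K3 := IsCyclotomicExtension.zeta 3 ℚ K3

lemma hzet : IsPrimitiveRoot zet (3 : ℕ) := IsCyclotomicExtension.zeta_spec 3 ℚ K3

def ee : R3 := hzet.toInteger

lemma ee_def : ee = hzet.toInteger := rfl

lemma ee_sq : ee ^ 2 = -ee - 1 := by
  have := IsCyclotomicExtension.Rat.Three.eta_sq (hζ := hzet)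
  rw [IsCyclotomicExtension.Rat.Three.coe_eta] at this
  rw [ee_def, this]

def ss : R3 := 2 * ee + 1

lemma ss_def : ss = 2 * ee + 1 := rfl

lemma ss_sq : ss ^ 2 = -3 := by rw [ss_def]; linear_combination (4 : R3) * ee_sq

lemma exists_coords (x : R3) : ∃ m n : ℤ, x = (m : R3) + n * ee := by
  have hadj : Algebra.adjoin ℤ ({hzet.integralPowerBasis.gen} : Set R3) = ⊤ :=
    hzet.integralPowerBasis.adjoin_gen_eq_top
  rw [hzet.integralPowerBasis_gen] at hadj
  have hx : x ∈ Algebra.adjoin ℤ ({hzet.toInteger} : Set R3) := by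
    rw [hadj]; trivial
  induction hx using Algebra.adjoin_induction with
  | mem y hy =>
      rw [Set.mem_singleton_iff] at hy
      exact ⟨0, 1, by rw [hy, ← ee_def]; push_cast; ring⟩
  | algebraMap r => exact ⟨r, 0, by push_cast [algebraMap_int_eq]; simp⟩
  | add y z hy hz hy' hz' =>
      obtain ⟨m1, n1, rfl⟩ := hy'
      obtain ⟨m2, n2, rfl⟩ := hz'
      exact ⟨m1 + m2, n1 + n2, by push_cast; ring⟩
  | mul y z hy hz hy' hz' =>
      obtain ⟨m1, n1, rfl⟩ := hy'
      obtain ⟨m2, n2, rfl⟩ := hz'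
      refine ⟨m1 * m2 - n1 * n2, m1 * n2 + n1 * m2 - n1 * n2, ?_⟩
      push_cast
      linear_combination (n1 * n2 : R3) * ee_sq

lemma coords_zero {m n : ℤ} (h : (m : R3) + n * ee = 0) : m = 0 ∧ n = 0 := by
  have hs : (2 * ee + 1) ^ 2 = -3 := by linear_combination (4 : R3) * ee_sq
  have h2 : ((2 * m - n : ℤ) : R3) = -(n : R3) * (2 * ee + 1) := by
    push_cast; linear_combination 2 * h
  have h3 : (((2 * m - n) ^ 2 + 3 * n ^ 2 : ℤ) : R3) = 0 := by
    push_cast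
    calc ((2 * (m:R3) - n)) ^ 2 + 3 * (n:R3) ^ 2
        = (-(n : R3) * (2 * ee + 1)) ^ 2 + 3 * n ^ 2 := by rw [← h2]; push_cast; ring
      _ = (n : R3) ^ 2 * ((2 * ee + 1) ^ 2 + 3) := by ring
      _ = 0 := by rw [hs]; ring
  have h4 : (2 * m - n) ^ 2 + 3 * n ^ 2 = 0 := by exact_mod_cast h3
  have hn : n = 0 := by nlinarith [sq_nonneg (2 * m - n), sq_nonneg n]
  have hm : m = 0 := by nlinarith [hn]
  exact ⟨hm, hn⟩

lemma coords_unique {m n m' n' : ℤ} (h : (m : R3) + n * ee = (m' : R3) + n' * ee) :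
    m = m' ∧ n = n' := by
  have h0 : ((m - m' : ℤ) : R3) + (n - n' : ℤ) * ee = 0 := by push_cast; linear_combination h
  have := coords_zero h0
  omega

lemma s_coords_unique {m n m' n' : ℤ} (h : (m : R3) + n * ss = (m' : R3) + n' * ss) :
    m = m' ∧ n = n' := by
  have h0 : ((m + n : ℤ) : R3) + (2 * n : ℤ) * ee = ((m' + n' : ℤ) : R3) + (2 * n' : ℤ) * ee := by
    push_cast; rw [ss_def] at h; linear_combination h
  have := coords_unique h0
  omega

lemma cube_coords (m n : ℤ) :
    ((m : R3) + n * ee) ^ 3 =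
      ((m^3 + n^3 - 3*m*n^2 : ℤ) : R3) + ((3*m^2*n - 3*m*n^2 : ℤ) : R3) * ee := by
  push_cast
  linear_combination ((n:R3)^3 * (ee - 1) + 3 * (m:R3) * (n:R3)^2) * ee_sq

lemma s_cube_coords (m n : ℤ) :
    ((m : R3) + n * ss) ^ 3 =
      ((m^3 - 9*m*n^2 : ℤ) : R3) + ((3*m^2*n - 3*n^3 : ℤ) : R3) * ss := by
  push_cast
  linear_combination (3 * (m:R3) * (n:R3)^2 + (n:R3)^3 * ss) * ss_sq

lemma even_mul_mul_sub (m n : ℤ) : Even (m * n * (m - n)) := by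
  rcases Int.even_or_odd m with hm | hm
  · exact (hm.mul_right n).mul_right _
  · rcases Int.even_or_odd n with hn | hn
    · exact (hn.mul_left m).mul_right _
    · exact (hm.sub_odd hn).mul_left _


lemma ee_cube : ee ^ 3 = 1 := by linear_combination (ee - 1) * ee_sq

lemma final_from_cube_even (p q : ℤ) {m n : ℤ} (hneven : Even n)
    (hc : (p : R3) + q * ss = ((m : R3) + n * ee) ^ 3) :
    ∃ m' n' : ℤ, p = m'^3 - 9*m'*n'^2 ∧ q = 3*m'^2*n' - 3*n'^3 := by
  obtain ⟨k, hk⟩ := hneven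
  have h1 : (m : R3) + n * ee = ((m - k : ℤ) : R3) + (k : ℤ) * ss := by
    rw [ss_def, hk]; push_cast; ring
  rw [h1, s_cube_coords] at hc
  have := s_coords_unique hc
  exact ⟨m - k, k, this.1, this.2⟩

lemma final_from_cube (p q : ℤ) {m n : ℤ}
    (hc : (p : R3) + q * ss = ((m : R3) + n * ee) ^ 3) :
    ∃ m' n' : ℤ, p = m'^3 - 9*m'*n'^2 ∧ q = 3*m'^2*n' - 3*n'^3 := by
  rcases Int.even_or_odd n with hn | hn
  · exact final_from_cube_even p q hn hc
  · rcases Int.even_or_odd m with hm | hm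
    · -- use coords (n - m, -m)
      have h1 : ((n - m : ℤ) : R3) + ((-m : ℤ) : R3) * ee = ee ^ 2 * ((m : R3) + n * ee) := by
        push_cast
        linear_combination (-(n : R3) * (ee - 1) - m) * ee_sq
      have hc' : (p : R3) + q * ss = (((n - m : ℤ) : R3) + ((-m : ℤ) : R3) * ee) ^ 3 := by
        have h6 : (ee ^ 2) ^ 3 = 1 := by
          rw [show (ee ^ 2) ^ 3 = (ee ^ 3) ^ 2 by ring, ee_cube, one_pow]
        rw [h1, mul_pow, h6, one_mul]
        exact hc
      exact final_from_cube_even p q (by rcases hm with ⟨i, hi⟩; exact ⟨-i, by omega⟩) hc'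
    · -- both odd: coords (-n, m - n)
      have h1 : ((-n : ℤ) : R3) + ((m - n : ℤ) : R3) * ee = ee * ((m : R3) + n * ee) := by
        push_cast
        linear_combination (-(n : R3)) * ee_sq
      have hc' : (p : R3) + q * ss = (((-n : ℤ) : R3) + ((m - n : ℤ) : R3) * ee) ^ 3 := by
        rw [h1, mul_pow, ee_cube, one_mul]
        exact hc
      exact final_from_cube_even p q (hm.sub_odd hn) hc'

theorem euler_descent_lemma (p q t : ℤ) (hco : IsCoprime p q) (hodd : Odd (p + q))
    (heq : p ^ 2 + 3 * q ^ 2 = t ^ 3) :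
    ∃ m n : ℤ, p = m^3 - 9*m*n^2 ∧ q = 3*m^2*n - 3*n^3 := by
  -- t is odd
  have hpq2 : p % 2 = 0 ∧ q % 2 = 1 ∨ p % 2 = 1 ∧ q % 2 = 0 := by
    rcases hodd with ⟨k, hk⟩; omega
  have htodd : Odd t := by
    rcases Int.even_or_odd t with ht | ht
    · exfalso
      obtain ⟨s, hs⟩ := ht
      have h4 : (p ^ 2 + 3 * q ^ 2) % 2 = 0 := by rw [heq, hs]; ring_nf; omega
      have hp2 := Int.emod_emod_of_dvd p (by norm_num : (2:ℤ) ∣ 4)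
      have : p ^ 2 % 2 = p % 2 ∧ q ^ 2 % 2 = q % 2 := by
        constructor <;> [rcases Int.even_or_odd p with ⟨i,hi⟩|⟨i,hi⟩;
          rcases Int.even_or_odd q with ⟨i,hi⟩|⟨i,hi⟩] <;> subst hi <;> ring_nf <;> omega
      omega
    · exact ht
  -- 3 does not divide t
  have h3t : ¬ (3:ℤ) ∣ t := by
    intro h
    obtain ⟨t1, rfl⟩ := h
    have h3p : (3:ℤ) ∣ p := by
      refine Int.prime_three.dvd_of_dvd_pow (n := 2) ⟨9 * t1 ^ 3 - q ^ 2, by linarith⟩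
    obtain ⟨p1, rfl⟩ := h3p
    have h3q : (3:ℤ) ∣ q := by
      refine Int.prime_three.dvd_of_dvd_pow (n := 2) ⟨3 * t1 ^ 3 - p1 ^ 2, by linarith⟩
    have := hco.isUnit_of_dvd' ⟨p1, rfl⟩ h3q
    rw [Int.isUnit_iff] at this
    omega
  -- set up in R3
  have hcast : ((p : R3)) ^ 2 + 3 * (q : R3) ^ 2 = ((t : R3)) ^ 3 := by exact_mod_cast heq
  have hmul : ((p : R3) + q * ss) * ((p : R3) - q * ss) = (t : R3) ^ 3 := by
    linear_combination hcast - (q : R3) ^ 2 * ss_sq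
  obtain ⟨a, b, hab⟩ := hco
  have h2t : IsCoprime (2:ℤ) t := by
    rw [Int.prime_two.coprime_iff_not_dvd]
    rcases htodd with ⟨j, hj⟩
    omega
  have h3tc : IsCoprime (3:ℤ) t := by rwa [Int.prime_three.coprime_iff_not_dvd]
  have h6t : IsCoprime (6:ℤ) (t ^ 3) :=
    ((show (6:ℤ) = 2 * 3 by norm_num) ▸ h2t.mul_left h3tc).pow_right
  obtain ⟨c, d, hcd⟩ := h6t
  have habR : (a : R3) * p + b * q = 1 := by exact_mod_cast congrArg (fun z : ℤ => (z : R3)) hab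
  have hcdR : (c : R3) * 6 + d * (t : R3) ^ 3 = 1 := by
    exact_mod_cast congrArg (fun z : ℤ => (z : R3)) hcd
  have hcop : IsCoprime ((p : R3) + q * ss) ((p : R3) - q * ss) := by
    refine ⟨3*(a:R3)*c - (b:R3)*c*ss + (d:R3)*((p : R3) - q * ss), 3*(a:R3)*c + (b:R3)*c*ss, ?_⟩
    linear_combination (6*(c:R3))*habR + hcdR + (d:R3)*hcast +
      (-2*(b:R3)*(c:R3)*(q:R3) - (d:R3)*(q:R3)^2) * ss_sq
  obtain ⟨δ, hassoc⟩ := exists_associated_pow_of_mul_eq_pow' hcop hmul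
  obtain ⟨u, hu⟩ := hassoc
  obtain ⟨m, n, hδ⟩ := exists_coords δ
  have hδ3 : δ ^ 3 = ((m^3 + n^3 - 3*m*n^2 : ℤ) : R3) + ((3*m^2*n - 3*m*n^2 : ℤ) : R3) * ee := by
    rw [hδ]; exact cube_coords m n
  have hBeven : Even (3*m^2*n - 3*m*n^2) := by
    have h := (even_mul_mul_sub m n).mul_left 3
    rwa [show 3 * (m * n * (m - n)) = 3*m^2*n - 3*m*n^2 by ring] at h
  obtain ⟨kB, hkB⟩ := hBeven
  obtain ⟨ko, hko⟩ := hodd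
  have hθc : (p : R3) + q * ss = ((p + q : ℤ) : R3) + ((2*q : ℤ) : R3) * ee := by
    rw [ss_def]; push_cast; ring
  have hmem := IsCyclotomicExtension.Rat.Three.Units.mem hzet u
  simp only [List.mem_cons, List.not_mem_nil, or_false] at hmem
  set A := m^3 + n^3 - 3*m*n^2 with hA
  set B := 3*m^2*n - 3*m*n^2 with hB
  rcases hmem with h | h | h | h | h | h <;> rw [h] at hu
  · -- u = 1
    rw [Units.val_one, mul_one] at hu
    exact final_from_cube p q (hu ▸ hδ.symm ▸ rfl : (p : R3) + q * ss = ((m:R3)+n*ee)^3)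
  · -- u = -1
    rw [Units.val_neg, Units.val_one] at hu
    refine final_from_cube p q (m := -m) (n := -n) ?_
    push_cast
    rw [← hu, hδ]
    push_cast
    ring
  · -- u = η
    rw [IsCyclotomicExtension.Rat.Three.coe_eta] at hu
    exfalso
    have e1 : (p : R3) + q * ss = ((-B : ℤ) : R3) + ((A - B : ℤ) : R3) * ee := by
      rw [← hu, hδ3, ← ee_def]
      push_cast
      linear_combination (B : R3) * ee_sq
    rw [hθc] at e1
    have := coords_unique e1
    omega
  · -- u = -η
    rw [Units.val_neg, IsCyclotomicExtension.Rat.Three.coe_eta] at hu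
    exfalso
    have e1 : (p : R3) + q * ss = ((B : ℤ) : R3) + ((B - A : ℤ) : R3) * ee := by
      rw [← hu, hδ3, ← ee_def]
      push_cast
      linear_combination (-(B : R3)) * ee_sq
    rw [hθc] at e1
    have := coords_unique e1
    omega
  · -- u = η^2
    rw [Units.val_pow_eq_pow_val, IsCyclotomicExtension.Rat.Three.coe_eta] at hu
    exfalso
    have e1 : (p : R3) + q * ss = ((B - A : ℤ) : R3) + ((-A : ℤ) : R3) * ee := by
      rw [← hu, hδ3, ← ee_def]
      push_cast
      linear_combination ((A : R3) + (B : R3) * (ee - 1)) * ee_sq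
    rw [hθc] at e1
    have := coords_unique e1
    omega
  · -- u = -η^2
    rw [Units.val_neg, Units.val_pow_eq_pow_val, IsCyclotomicExtension.Rat.Three.coe_eta] at hu
    exfalso
    have e1 : (p : R3) + q * ss = ((A - B : ℤ) : R3) + ((A : ℤ) : R3) * ee := by
      rw [← hu, hδ3, ← ee_def]
      push_cast
      linear_combination (-(A : R3) - (B : R3) * (ee - 1)) * ee_sq
    rw [hθc] at e1
    have := coords_unique e1
    omega

-- forward coprime shift
lemma cop_add_mul {x y : ℤ} (h : IsCoprime x y) (z : ℤ) : IsCoprime x (y + x * z) := by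
  obtain ⟨a, b, hab⟩ := h
  exact ⟨a - b * z, b, by linear_combination hab⟩

lemma assoc_cube {d a : ℤ} (h : Associated (d ^ 3) a) : ∃ x : ℤ, a = x ^ 3 := by
  obtain ⟨u, hu⟩ := h
  rcases Int.units_eq_one_or u with rfl | rfl
  · exact ⟨d, by simpa using hu.symm⟩
  · exact ⟨-d, by rw [← hu]; simp; ring⟩

lemma int_cubes_of_coprime_mul {a b c : ℤ} (hco : IsCoprime a b) (h : a * b = c ^ 3) :
    (∃ x : ℤ, a = x ^ 3) ∧ ∃ y : ℤ, b = y ^ 3 := by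
  constructor
  · obtain ⟨d, hd⟩ := exists_associated_pow_of_mul_eq_pow' hco h
    exact assoc_cube hd
  · obtain ⟨d, hd⟩ := exists_associated_pow_of_mul_eq_pow' hco.symm (by rw [mul_comm]; exact h)
    exact assoc_cube hd

lemma cube_emod_two (x : ℤ) : x ^ 3 % 2 = x % 2 := by
  rcases Int.even_or_odd x with ⟨i, hi⟩ | ⟨i, hi⟩ <;> subst hi <;> ring_nf <;> omega

lemma natAbs_lt_of_cube {γ c : ℤ} (h : |γ| ^ 3 < |c| ^ 3) : γ.natAbs < c.natAbs := by
  have h2 : |γ| < |c| := by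
    by_contra hle
    push_neg at hle
    exact absurd (pow_le_pow_left₀ (abs_nonneg c) hle 3) (not_le.mpr h)
  rw [Int.abs_eq_natAbs, Int.abs_eq_natAbs] at h2
  exact_mod_cast h2

theorem two_cube_descent : ∀ N : ℕ, ∀ a b c : ℤ, c.natAbs ≤ N → c ≠ 0 →
    a ^ 3 + b ^ 3 = 2 * c ^ 3 → a = b := by
  intro N
  induction N with
  | zero =>
    intro a b c hN hc _
    exact absurd (Int.natAbs_eq_zero.mp (by omega)) hc
  | succ N ih =>
    intro a b c hN hc heq
    by_cases hcop : IsCoprime a b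
    · -- main coprime case
      have hodd : Odd a ∧ Odd b := by
        have h1 := cube_emod_two a
        have h2 := cube_emod_two b
        have h3 : (a ^ 3 + b ^ 3) % 2 = 0 := by rw [heq]; exact Int.mul_emod_right 2 _
        rcases Int.even_or_odd a with ha | ha <;> rcases Int.even_or_odd b with hb | hb
        · exfalso
          have := hcop.isUnit_of_dvd' ha.two_dvd hb.two_dvd
          rw [Int.isUnit_iff] at this; omega
        · exfalso; rcases ha with ⟨i, hi⟩; rcases hb with ⟨j, hj⟩; omega
        · exfalso; rcases ha with ⟨i, hi⟩; rcases hb with ⟨j, hj⟩; omega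
        · exact ⟨ha, hb⟩
      obtain ⟨P, hP⟩ : Even (a + b) := hodd.1.add_odd hodd.2
      obtain ⟨Q, hQ⟩ : Even (a - b) := hodd.1.sub_odd hodd.2
      have hodda : Odd a := hodd.1
      have ha : a = P + Q := by omega
      have hb : b = P - Q := by omega
      subst ha hb
      by_cases hq0 : Q = 0
      · rw [hq0]; ring
      have hpq : IsCoprime P Q := by
        obtain ⟨x, y, hxy⟩ := hcop
        exact ⟨x + y, x - y, by linear_combination hxy⟩
      have hkey : P * (P ^ 2 + 3 * Q ^ 2) = c ^ 3 := by linarith [heq]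
      have hp0 : P ≠ 0 := by
        intro h0
        rw [h0, zero_mul] at hkey
        exact hc (pow_eq_zero_iff (by norm_num : (3:ℕ) ≠ 0) |>.mp hkey.symm)
      have hPQodd : Odd (P + Q) := by
        rcases hodda with ⟨k, hk⟩
        exact ⟨k, by omega⟩
      have h1P : 1 ≤ P ^ 2 := by rcases hp0.lt_or_gt with h | h <;> nlinarith
      have h1Q : 1 ≤ Q ^ 2 := by rcases (show Q ≠ 0 from hq0).lt_or_gt with h | h <;> nlinarith
      by_cases h3p : (3:ℤ) ∣ P
      · -- case 3 ∣ P
        obtain ⟨r, rfl⟩ := h3p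
        have h3q : ¬ (3:ℤ) ∣ Q := by
          intro h
          have := hpq.isUnit_of_dvd' ⟨r, rfl⟩ h
          rw [Int.isUnit_iff] at this; omega
        have h3c : (3:ℤ) ∣ c := by
          apply Int.prime_three.dvd_of_dvd_pow (n := 3)
          exact ⟨r * ((3*r) ^ 2 + 3 * Q ^ 2), by rw [← hkey]; ring⟩
        obtain ⟨w, rfl⟩ := h3c
        have hkey2 : r * (3 * r ^ 2 + Q ^ 2) = 3 * w ^ 3 := by
          have h9 : (9:ℤ) * (r * (3 * r ^ 2 + Q ^ 2)) = 9 * (3 * w ^ 3) := by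
            linear_combination hkey
          exact mul_left_cancel₀ (by norm_num) h9
        have h3r : (3:ℤ) ∣ r := by
          rcases Int.prime_three.2.2 _ _ (⟨w ^ 3, hkey2⟩ : (3:ℤ) ∣ r * (3 * r ^ 2 + Q ^ 2)) with
            h | h
          · exact h
          · exfalso
            obtain ⟨k, hk⟩ := h
            have : (3:ℤ) ∣ Q ^ 2 := ⟨k - r ^ 2, by linarith⟩
            exact h3q (Int.prime_three.dvd_of_dvd_pow this)
        obtain ⟨s, rfl⟩ := h3r
        have hkey3 : s * (27 * s ^ 2 + Q ^ 2) = w ^ 3 := by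
          have h3' : (3:ℤ) * (s * (27 * s ^ 2 + Q ^ 2)) = 3 * w ^ 3 := by
            linear_combination hkey2
          exact mul_left_cancel₀ (by norm_num) h3'
        have hcops : IsCoprime s Q := hpq.of_isCoprime_of_dvd_left ⟨9, by ring⟩
        have hcop4 : IsCoprime s (27 * s ^ 2 + Q ^ 2) := by
          have h2' := cop_add_mul (hcops.pow_right (n := 2)) (27 * s)
          rwa [show Q ^ 2 + s * (27 * s) = 27 * s ^ 2 + Q ^ 2 by ring] at h2'
        obtain ⟨⟨F, hF⟩, ⟨G, hG⟩⟩ := int_cubes_of_coprime_mul hcop4 hkey3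
        have heq5 : Q ^ 2 + 3 * (3 * s) ^ 2 = G ^ 3 := by rw [← hG]; ring
        have hcopq3s : IsCoprime Q (3 * s) :=
          ((Int.prime_three.coprime_iff_not_dvd.mpr h3q).symm).mul_right hcops.symm
        have hoddq3s : Odd (Q + 3 * s) := by
          rcases hPQodd with ⟨k, hk⟩
          exact ⟨Q + 3 * s - 1 - (Q + 3*s - 1)/2, by omega⟩
        obtain ⟨m, n, hQm, h3sm⟩ := euler_descent_lemma Q (3 * s) G hcopq3s hoddq3s heq5
        have hsm : s = m ^ 2 * n - n ^ 3 := by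
          have h3'' : (3:ℤ) * s = 3 * (m ^ 2 * n - n ^ 3) := by linear_combination h3sm
          exact mul_left_cancel₀ (by norm_num) h3''
        have hs0 : s ≠ 0 := fun hs0 => hp0 (by rw [hs0]; ring)
        have hn0 : n ≠ 0 := fun h0 => hs0 (by rw [hsm, h0]; ring)
        have hm0 : m ≠ 0 := fun h0 => hq0 (by rw [hQm, h0]; ring)
        have hmn : IsCoprime m n :=
          (hcops.symm.of_isCoprime_of_dvd_left ⟨m ^ 2 - 9 * n ^ 2, by rw [hQm]; ring⟩
            ).of_isCoprime_of_dvd_right ⟨m ^ 2 - n ^ 2, by rw [hsm]; ring⟩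
        have hparmn : m % 2 = 0 ∧ n % 2 = 1 ∨ m % 2 = 1 ∧ n % 2 = 0 := by
          rcases Int.even_or_odd m with hm | hm <;> rcases Int.even_or_odd n with hn | hn
          · exfalso
            have := hmn.isUnit_of_dvd' hm.two_dvd hn.two_dvd
            rw [Int.isUnit_iff] at this; omega
          · left
            rcases hm with ⟨i, hi⟩; rcases hn with ⟨j, hj⟩; omega
          · right
            rcases hm with ⟨i, hi⟩; rcases hn with ⟨j, hj⟩; omega
          · exfalso
            have h9odd : Odd (9 * (m * n ^ 2)) := (by decide : Odd (9:ℤ)).mul (hm.mul (hn.pow))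
            have hEQ : Even Q := by
              rw [hQm, show m ^ 3 - 9 * m * n ^ 2 = m ^ 3 - 9 * (m * n ^ 2) by ring]
              exact (hm.pow).sub_odd h9odd
            have hES : Even s := by
              rw [hsm]
              exact ((hm.pow).mul hn).sub_odd (hn.pow)
            rcases hPQodd with ⟨k, hk⟩
            rcases hEQ with ⟨i, hi⟩; rcases hES with ⟨j, hj⟩
            omega
        have hcn1 : IsCoprime n (m - n) := by
          have := cop_add_mul hmn.symm (-1)
          rwa [show m + n * (-1) = m - n by ring] at this
        have hcn2 : IsCoprime n (m + n) := by
          have := cop_add_mul hmn.symm 1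
          rwa [show m + n * 1 = m + n by ring] at this
        have hc12 : IsCoprime (m - n) (m + n) := by
          have hoddmn : ¬ (2:ℤ) ∣ (m - n) := by
            intro ⟨k, hk⟩; omega
          have d2 : IsCoprime (m - n) (2:ℤ) := (Int.prime_two.coprime_iff_not_dvd.mpr hoddmn).symm
          have := cop_add_mul (d2.mul_right hcn1.symm) 1
          rwa [show 2 * n + (m - n) * 1 = m + n by ring] at this
        have hprod : n * ((m - n) * (m + n)) = F ^ 3 := by rw [← hF, hsm]; ring
        obtain ⟨⟨γ, hγ⟩, ⟨W2, hW2⟩⟩ := int_cubes_of_coprime_mul (hcn1.mul_right hcn2) hprod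
        obtain ⟨⟨α, hα⟩, ⟨β, hβ⟩⟩ := int_cubes_of_coprime_mul hc12 hW2
        have hnew : β ^ 3 + (-α) ^ 3 = 2 * γ ^ 3 := by
          rw [show (-α) ^ 3 = -(α ^ 3) by ring, ← hα, ← hβ, ← hγ]; ring
        have hγ0 : γ ≠ 0 := fun h0 => hn0 (by rw [hγ, h0]; ring)
        have hz2 : m ^ 2 - n ^ 2 ≠ 0 := by
          intro h0
          rcases mul_eq_zero.mp (show (m - n) * (m + n) = 0 by linear_combination h0) with h | h <;>
            omega
        have habs : |γ| ^ 3 < |3 * w| ^ 3 := by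
          have e1 : |γ| ^ 3 = |n| := by rw [← abs_pow, ← hγ]
          have e2 : |s| = |n| * |m ^ 2 - n ^ 2| := by
            rw [hsm, show m ^ 2 * n - n ^ 3 = n * (m ^ 2 - n ^ 2) by ring, abs_mul]
          have e3 : 1 ≤ |m ^ 2 - n ^ 2| := Int.one_le_abs hz2
          have e4a : |3 * (3 * s)| = 9 * |s| := by
            rw [show (3:ℤ) * (3 * s) = 9 * s by ring, abs_mul]
            norm_num
          have e4 : |3 * w| ^ 3 = (9 * |s|) * ((3 * (3 * s)) ^ 2 + 3 * Q ^ 2) := by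
            rw [← abs_pow, ← hkey, abs_mul, abs_of_nonneg (a := (3*(3*s))^2 + 3*Q^2)
              (by positivity), e4a]
          have e5 : 1 ≤ (3 * (3 * s)) ^ 2 + 3 * Q ^ 2 := by nlinarith [sq_nonneg (3*(3*s))]
          have e6 : 1 ≤ |n| := Int.one_le_abs hn0
          have f1 : |n| ≤ |s| := by
            calc |n| = |n| * 1 := by ring
              _ ≤ |n| * |m ^ 2 - n ^ 2| := mul_le_mul_of_nonneg_left e3 (abs_nonneg n)
              _ = |s| := e2.symm
          have f2 : (9 * |s|) * 1 ≤ (9 * |s|) * ((3 * (3 * s)) ^ 2 + 3 * Q ^ 2) :=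
            mul_le_mul_of_nonneg_left e5 (by positivity)
          rw [e1, e4]
          linarith
        have hsize : γ.natAbs ≤ N := by
          have := natAbs_lt_of_cube habs
          omega
        have hab2 := ih β (-α) γ hsize hγ0 hnew
        exfalso
        apply hm0
        have hmeq : m + n = -(m - n) := by rw [hβ, hα, hab2]; ring
        omega
      · -- case ¬ 3 ∣ P
        have hcP3 : IsCoprime P (3:ℤ) := (Int.prime_three.coprime_iff_not_dvd.mpr h3p).symm
        have hcop2 : IsCoprime P (P ^ 2 + 3 * Q ^ 2) := by
          have h1 : IsCoprime P (3 * Q ^ 2) := hcP3.mul_right (hpq.pow_right (n := 2))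
          have h2 := cop_add_mul h1 P
          rwa [show 3 * Q ^ 2 + P * P = P ^ 2 + 3 * Q ^ 2 by ring] at h2
        obtain ⟨⟨S, hS⟩, ⟨T, hT⟩⟩ := int_cubes_of_coprime_mul hcop2 hkey
        obtain ⟨m, n, hPm, hQm⟩ := euler_descent_lemma P Q T hpq hPQodd hT
        have hn0 : n ≠ 0 := fun h0 => hq0 (by rw [hQm, h0]; ring)
        have hm0 : m ≠ 0 := fun h0 => hp0 (by rw [hPm, h0]; ring)
        have h3m : ¬ (3:ℤ) ∣ m := by
          rintro ⟨k, rfl⟩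
          exact h3p ⟨9 * k ^ 3 - 9 * k * n ^ 2, by rw [hPm]; ring⟩
        have hmn : IsCoprime m n :=
          (hpq.of_isCoprime_of_dvd_left ⟨m ^ 2 - 9 * n ^ 2, by rw [hPm]; ring⟩
            ).of_isCoprime_of_dvd_right ⟨3 * m ^ 2 - 3 * n ^ 2, by rw [hQm]; ring⟩
        have hparmn : m % 2 = 0 ∧ n % 2 = 1 ∨ m % 2 = 1 ∧ n % 2 = 0 := by
          rcases Int.even_or_odd m with hm | hm <;> rcases Int.even_or_odd n with hn | hn
          · exfalso
            have := hmn.isUnit_of_dvd' hm.two_dvd hn.two_dvd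
            rw [Int.isUnit_iff] at this; omega
          · left
            rcases hm with ⟨i, hi⟩; rcases hn with ⟨j, hj⟩; omega
          · right
            rcases hm with ⟨i, hi⟩; rcases hn with ⟨j, hj⟩; omega
          · exfalso
            have h9odd : Odd (9 * (m * n ^ 2)) := (by decide : Odd (9:ℤ)).mul (hm.mul (hn.pow))
            have hEP : Even P := by
              rw [hPm, show m ^ 3 - 9 * m * n ^ 2 = m ^ 3 - 9 * (m * n ^ 2) by ring]
              exact (hm.pow).sub_odd h9odd
            have h3odd : Odd (3 * (m ^ 2 * n)) := (by decide : Odd (3:ℤ)).mul ((hm.pow).mul hn)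
            have h3odd' : Odd (3 * (n ^ 3)) := (by decide : Odd (3:ℤ)).mul (hn.pow)
            have hEQ : Even Q := by
              rw [hQm, show 3 * m ^ 2 * n - 3 * n ^ 3 = 3 * (m ^ 2 * n) - 3 * n ^ 3 by ring]
              exact h3odd.sub_odd h3odd'
            rcases hPQodd with ⟨k, hk⟩
            rcases hEP with ⟨i, hi⟩; rcases hEQ with ⟨j, hj⟩
            omega
        have c_m_3n : IsCoprime m (3 * n) :=
          ((Int.prime_three.coprime_iff_not_dvd.mpr h3m).symm).mul_right hmn
        have c2 : IsCoprime m (m - 3 * n) := by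
          have := cop_add_mul c_m_3n.neg_right 1
          rwa [show -(3 * n) + m * 1 = m - 3 * n by ring] at this
        have c3 : IsCoprime m (m + 3 * n) := by
          have := cop_add_mul c_m_3n 1
          rwa [show 3 * n + m * 1 = m + 3 * n by ring] at this
        have c4 : IsCoprime (m - 3 * n) (m + 3 * n) := by
          have hodd1 : ¬ (2:ℤ) ∣ (m - 3 * n) := by
            intro ⟨k, hk⟩; omega
          have d2 : IsCoprime (m - 3 * n) (2:ℤ) :=
            (Int.prime_two.coprime_iff_not_dvd.mpr hodd1).symm
          have d3 : IsCoprime (m - 3 * n) (3:ℤ) := by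
            refine (Int.prime_three.coprime_iff_not_dvd.mpr ?_).symm
            rintro ⟨k, hk⟩
            exact h3m ⟨k + n, by linarith⟩
          have dn : IsCoprime (m - 3 * n) n := by
            have := cop_add_mul hmn.symm (-3)
            exact (by rwa [show m + n * (-3) = m - 3 * n by ring] at this :
              IsCoprime n (m - 3 * n)).symm
          have := cop_add_mul ((d2.mul_right d3).mul_right dn) 1
          rwa [show 2 * 3 * n + (m - 3 * n) * 1 = m + 3 * n by ring] at this
        have hprod : m * ((m - 3 * n) * (m + 3 * n)) = S ^ 3 := by rw [← hS, hPm]; ring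
        obtain ⟨⟨γ, hγ⟩, ⟨W2, hW2⟩⟩ := int_cubes_of_coprime_mul (c2.mul_right c3) hprod
        obtain ⟨⟨α, hα⟩, ⟨β, hβ⟩⟩ := int_cubes_of_coprime_mul c4 hW2
        have hnew : α ^ 3 + β ^ 3 = 2 * γ ^ 3 := by rw [← hα, ← hβ, ← hγ]; ring
        have hγ0 : γ ≠ 0 := fun h0 => hm0 (by rw [hγ, h0]; ring)
        have hz2 : m ^ 2 - 9 * n ^ 2 ≠ 0 := by
          intro h0
          exact hp0 (by rw [hPm, show m ^ 3 - 9 * m * n ^ 2 = m * (m ^ 2 - 9 * n ^ 2) by ring,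
            h0, mul_zero])
        have habs : |γ| ^ 3 < |c| ^ 3 := by
          have e1 : |γ| ^ 3 = |m| := by rw [← abs_pow, ← hγ]
          have e2 : |P| = |m| * |m ^ 2 - 9 * n ^ 2| := by
            rw [hPm, show m ^ 3 - 9 * m * n ^ 2 = m * (m ^ 2 - 9 * n ^ 2) by ring, abs_mul]
          have e3 : 1 ≤ |m ^ 2 - 9 * n ^ 2| := Int.one_le_abs hz2
          have e4 : |c| ^ 3 = |P| * (P ^ 2 + 3 * Q ^ 2) := by
            rw [← abs_pow, ← hkey, abs_mul, abs_of_nonneg (a := P ^ 2 + 3 * Q ^ 2) (by positivity)]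
          have e5 : 4 ≤ P ^ 2 + 3 * Q ^ 2 := by linarith
          have e6 : 1 ≤ |P| := Int.one_le_abs hp0
          have f1 : |m| ≤ |P| := by
            calc |m| = |m| * 1 := by ring
              _ ≤ |m| * |m ^ 2 - 9 * n ^ 2| := mul_le_mul_of_nonneg_left e3 (abs_nonneg m)
              _ = |P| := e2.symm
          have f2 : |P| * 4 ≤ |P| * (P ^ 2 + 3 * Q ^ 2) :=
            mul_le_mul_of_nonneg_left e5 (abs_nonneg P)
          rw [e1, e4]
          linarith
        have hsize : γ.natAbs ≤ N := by
          have := natAbs_lt_of_cube habs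
          omega
        have hab2 := ih α β γ hsize hγ0 hnew
        exfalso
        apply hn0
        have hmeq : m - 3 * n = m + 3 * n := by rw [hα, hβ, hab2]
        omega
    · -- reduce by a common prime factor
      have hg0 : Int.gcd a b ≠ 0 := by
        intro h0
        obtain ⟨rfl, rfl⟩ := Int.gcd_eq_zero_iff.mp h0
        have hceq : c ^ 3 = 0 := by linarith
        exact hc (pow_eq_zero_iff (by norm_num : (3:ℕ) ≠ 0) |>.mp hceq)
      have hg1 : Int.gcd a b ≠ 1 := fun h => hcop (Int.isCoprime_iff_gcd_eq_one.mpr h)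
      obtain ⟨pp, hpp, hpd⟩ := Nat.exists_prime_and_dvd hg1
      have hppZ : Prime (pp : ℤ) := Nat.prime_iff_prime_int.mp hpp
      have hpa : (pp : ℤ) ∣ a := (Int.natCast_dvd_natCast.mpr hpd).trans (Int.gcd_dvd_left _ _)
      have hpb : (pp : ℤ) ∣ b := (Int.natCast_dvd_natCast.mpr hpd).trans (Int.gcd_dvd_right _ _)
      obtain ⟨a1, rfl⟩ := hpa
      obtain ⟨b1, rfl⟩ := hpb
      have hppne : (pp : ℤ) ≠ 0 := by exact_mod_cast hpp.ne_zero
      have hdvd3 : ((pp : ℤ)) ^ 3 ∣ 2 * c ^ 3 := ⟨a1 ^ 3 + b1 ^ 3, by linear_combination -heq⟩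
      have hpc : (pp : ℤ) ∣ c := by
        by_cases hp2 : pp = 2
        · subst hp2
          obtain ⟨k, hk⟩ := hdvd3
          apply Int.prime_two.dvd_of_dvd_pow (n := 3)
          exact ⟨2 * k, by push_cast at hk ⊢; linarith⟩
        · have hp2' : ¬ (pp : ℤ) ∣ 2 := by
            intro hd
            have hd' : pp ∣ 2 := by exact_mod_cast hd
            have h2le := hpp.two_le
            have := Nat.le_of_dvd (by norm_num) hd'
            omega
          have hdvd1 : (pp : ℤ) ∣ 2 * c ^ 3 := (dvd_pow_self _ (by norm_num : (3:ℕ) ≠ 0)).trans hdvd3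
          rcases hppZ.2.2 _ _ hdvd1 with h | h
          · exact absurd h hp2'
          · exact hppZ.dvd_of_dvd_pow h
      obtain ⟨c1, rfl⟩ := hpc
      have heq1 : a1 ^ 3 + b1 ^ 3 = 2 * c1 ^ 3 := by
        have h8 : (pp : ℤ) ^ 3 * (a1 ^ 3 + b1 ^ 3) = (pp : ℤ) ^ 3 * (2 * c1 ^ 3) := by
          linear_combination heq
        exact mul_left_cancel₀ (pow_ne_zero 3 hppne) h8
      have hc1 : c1 ≠ 0 := fun h => hc (by rw [h, mul_zero])
      have hsize : c1.natAbs ≤ N := by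
        have hnat : ((pp : ℤ) * c1).natAbs = pp * c1.natAbs := by
          rw [Int.natAbs_mul, Int.natAbs_natCast]
        have h2le : 2 ≤ pp := hpp.two_le
        have hc1pos : 1 ≤ c1.natAbs := by
          rcases Nat.eq_zero_or_pos c1.natAbs with h | h
          · exact absurd (Int.natAbs_eq_zero.mp h) hc1
          · exact h
        have hmul2 : 2 * c1.natAbs ≤ pp * c1.natAbs := Nat.mul_le_mul_right _ h2le
        omega
      have := ih a1 b1 c1 hsize hc1 heq1
      rw [this]

lemma rat_key (x y : ℚ) (h : y ^ 2 = x ^ 3 - 27) : x = 3 ∧ y = 0 := by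
  have hx0 : x ≠ 0 := by
    intro h0
    rw [h0] at h
    nlinarith [sq_nonneg y]
  have h3x : (3 : ℚ) * x ≠ 0 := by simp [hx0]
  set u : ℚ := 3 / x + y / (3 * x) with hu
  set v : ℚ := 3 / x - y / (3 * x) with hv
  have huv : u ^ 3 + v ^ 3 = 2 := by
    rw [hu, hv]
    field_simp
    ring_nf
    linear_combination 54 * h
  set C : ℤ := (u.den : ℤ) * (v.den : ℤ) with hC
  have hC0 : C ≠ 0 := by
    rw [hC]
    positivity
  set a : ℤ := u.num * (v.den : ℤ) with ha
  set b : ℤ := v.num * (u.den : ℤ) with hb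
  have hua : (a : ℚ) = u * (C : ℚ) := by
    rw [ha, hC]
    push_cast
    rw [show ((u.num : ℚ)) = u * (u.den : ℚ) from
      (div_eq_iff (by exact_mod_cast u.den_ne_zero : ((u.den : ℚ)) ≠ 0)).mp (Rat.num_div_den u)]
    ring
  have hvb : (b : ℚ) = v * (C : ℚ) := by
    rw [hb, hC]
    push_cast
    rw [show ((v.num : ℚ)) = v * (v.den : ℚ) from
      (div_eq_iff (by exact_mod_cast v.den_ne_zero : ((v.den : ℚ)) ≠ 0)).mp (Rat.num_div_den v)]
    ring
  have hint : a ^ 3 + b ^ 3 = 2 * C ^ 3 := by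
    have hq : (a : ℚ) ^ 3 + (b : ℚ) ^ 3 = 2 * (C : ℚ) ^ 3 := by
      rw [hua, hvb]
      linear_combination (C : ℚ) ^ 3 * huv
    exact_mod_cast hq
  have hab : a = b := two_cube_descent C.natAbs a b C le_rfl hC0 hint
  have huveq : u = v := by
    have hCq : (C : ℚ) ≠ 0 := Int.cast_ne_zero.mpr hC0
    have : u * (C : ℚ) = v * (C : ℚ) := by rw [← hua, ← hvb, hab]
    exact mul_right_cancel₀ hCq this
  have hy0 : y = 0 := by
    have hdiff : u - v = 2 * (y / (3 * x)) := by rw [hu, hv]; ring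
    rw [huveq, sub_self] at hdiff
    have : y / (3 * x) = 0 := by linarith
    rcases div_eq_zero_iff.mp this with h1 | h1
    · exact h1
    · exact absurd h1 h3x
  refine ⟨?_, hy0⟩
  rw [hy0] at h
  have h27 : (x - 3) * (x ^ 2 + 3 * x + 9) = 0 := by linear_combination -h
  rcases mul_eq_zero.mp h27 with h1 | h1
  · linarith
  · nlinarith [sq_nonneg (2 * x + 3)]

/-- The Mordell curve y² = x³ − 27 has only finitely many rational points, and its
only affine rational point is (3, 0). -/
theorem mordell_minus27_rational_points :
    {P : ℚ × ℚ | P.2 ^ 2 = P.1 ^ 3 - 27}.Finite ∧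
    ∀ x y : ℚ, y ^ 2 = x ^ 3 - 27 → x = 3 ∧ y = 0 := by
  constructor
  · apply Set.Finite.subset (Set.finite_singleton ((3 : ℚ), (0 : ℚ)))
    rintro ⟨x, y⟩ hmem
    obtain ⟨hx, hy⟩ := rat_key x y hmem
    simp [Set.mem_singleton_iff, Prod.ext_iff, hx, hy]
  · exact rat_key

end
end

section
/- Any subgroup of GL₂(F_p) that contains the standard Borel subgroup of upper-triangular invertible matrices as a proper subgroup must be all of GL₂(F_p), i.e. the Borel subgroup is maximal in GL₂(F_p). -/
open Matrix

private def wmat (p : ℕ) : Matrix (Fin 2) (Fin 2) (ZMod p) := !![0,1;1,0]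

private def wgl (p : ℕ) : GL (Fin 2) (ZMod p) :=
  ⟨wmat p, wmat p, by simp [wmat, Matrix.mul_fin_two, Matrix.one_fin_two],
    by simp [wmat, Matrix.mul_fin_two, Matrix.one_fin_two]⟩

private lemma decomp (p : ℕ) [Fact p.Prime] (M : GL (Fin 2) (ZMod p))
    (hc : (M : Matrix (Fin 2) (Fin 2) (ZMod p)) 1 0 ≠ 0) :
    ∃ L R : GL (Fin 2) (ZMod p),
      (L : Matrix (Fin 2) (Fin 2) (ZMod p)) 1 0 = 0 ∧
      (R : Matrix (Fin 2) (Fin 2) (ZMod p)) 1 0 = 0 ∧ M = L * wgl p * R := by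
  set a := (M : Matrix (Fin 2) (Fin 2) (ZMod p)) 0 0
  set b := (M : Matrix (Fin 2) (Fin 2) (ZMod p)) 0 1
  set c := (M : Matrix (Fin 2) (Fin 2) (ZMod p)) 1 0
  set d := (M : Matrix (Fin 2) (Fin 2) (ZMod p)) 1 1
  have hdet : a * d - b * c ≠ 0 := by
    have := (Matrix.isUnit_iff_isUnit_det _).1 M.isUnit
    rw [Matrix.det_fin_two] at this
    exact this.ne_zero
  have hLdet : (b - a * d * c⁻¹) * c - a * 0 ≠ 0 := by
    field_simp
    intro h
    apply hdet
    linear_combination -h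
  have hL : IsUnit (!![b - a * d * c⁻¹, a; 0, c] : Matrix (Fin 2) (Fin 2) (ZMod p)) := by
    rw [Matrix.isUnit_iff_isUnit_det, Matrix.det_fin_two]
    simpa using isUnit_iff_ne_zero.2 hLdet
  have hR : IsUnit (!![1, d * c⁻¹; 0, 1] : Matrix (Fin 2) (Fin 2) (ZMod p)) := by
    rw [Matrix.isUnit_iff_isUnit_det, Matrix.det_fin_two]
    simp
  obtain ⟨L, hLv⟩ := hL
  obtain ⟨R, hRv⟩ := hR
  refine ⟨L, R, by simp [hLv], by simp [hRv], ?_⟩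
  ext : 1
  show (M : Matrix (Fin 2) (Fin 2) (ZMod p)) = _
  rw [Units.val_mul, Units.val_mul, hLv, hRv]
  show _ = _ * wmat p * _
  rw [Matrix.eta_fin_two (M : Matrix (Fin 2) (Fin 2) (ZMod p))]
  simp only [wmat, Matrix.mul_fin_two]
  ext i j
  fin_cases i <;> fin_cases j <;> simp
  · rfl
  · show b = a * (d * c⁻¹) + (b - a * d * c⁻¹)
    ring
  · rfl
  · show d = c * (d * c⁻¹)
    field_simp

/-- The standard Borel subgroup of upper-triangular invertible matrices is a
maximal subgroup of GL₂(F_p). -/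
theorem borel_maximal (p : ℕ) [Fact p.Prime]
    (B G : Subgroup (GL (Fin 2) (ZMod p)))
    (hB : (B : Set (GL (Fin 2) (ZMod p))) =
      {M : GL (Fin 2) (ZMod p) | (M : Matrix (Fin 2) (Fin 2) (ZMod p)) 1 0 = 0})
    (hBG : B ≤ G) (hne : G ≠ B) : G = ⊤ := by
  have memB : ∀ x : GL (Fin 2) (ZMod p),
      x ∈ B ↔ (x : Matrix (Fin 2) (Fin 2) (ZMod p)) 1 0 = 0 := by
    intro x
    rw [← SetLike.mem_coe, hB]; rfl
  obtain ⟨g, hgG, hgB⟩ := SetLike.exists_of_lt (lt_of_le_of_ne hBG (Ne.symm hne))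
  have hgc : (g : Matrix (Fin 2) (Fin 2) (ZMod p)) 1 0 ≠ 0 := fun h => hgB ((memB g).2 h)
  obtain ⟨L, R, hL, hR, hg⟩ := decomp p g hgc
  have hw : wgl p ∈ G := by
    have hLG : L ∈ G := hBG ((memB L).2 hL)
    have hRG : R ∈ G := hBG ((memB R).2 hR)
    have : wgl p = L⁻¹ * g * R⁻¹ := by rw [hg]; group
    rw [this]
    exact mul_mem (mul_mem (inv_mem hLG) hgG) (inv_mem hRG)
  rw [eq_top_iff]
  intro M _
  by_cases hM : (M : Matrix (Fin 2) (Fin 2) (ZMod p)) 1 0 = 0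
  · exact hBG ((memB M).2 hM)
  · obtain ⟨L', R', hL', hR', hM'⟩ := decomp p M hM
    rw [hM']
    exact mul_mem (mul_mem (hBG ((memB L').2 hL')) hw) (hBG ((memB R').2 hR'))
end
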